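/- Let α, σ, ξ be real numbers with 0 < α < 1/2, σ ≥ 1−α and 0 < ξ < 1/4. Then −π/2 < −4αξ < arg( Γ(σ+iξ) · Γ(2α) / Γ(σ+2α+iξ) ) < 0, where arg denotes the principal argument with values in (−π, π]. -/

import Mathlib

open Real Complex Finset Filter Topology


lemma my_mk_re (X Y : ℝ) : ((X : ℂ) + Complex.I * (Y : ℂ)).re = X := by simp
lemma my_mk_im (X Y : ℝ) : ((X : ℂ) + Complex.I * (Y : ℂ)).im = Y := by simp

lemma my_arctan_le_self {x : ℝ} (hx : 0 ≤ x) : Real.arctan x ≤ x := by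
  have h0 : 0 ≤ Real.arctan x := by
    rw [← Real.arctan_zero]
    exact Real.arctan_strictMono.monotone hx
  calc Real.arctan x ≤ Real.tan (Real.arctan x) :=
        Real.le_tan h0 (Real.arctan_lt_pi_div_two x)
    _ = x := Real.tan_arctan x

lemma my_arctan_diff_le {a b ξ : ℝ} (ha : 0 < a) (hab : a < b) (hξ : 0 < ξ) :
    Real.arctan (ξ / a) - Real.arctan (ξ / b) ≤ ξ / a - ξ / b := by
  have hb : 0 < b := ha.trans hab
  have hu : 0 < ξ / a := by positivity
  have hv : 0 < ξ / b := by positivity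
  have hvu : ξ / b < ξ / a := by
    apply div_lt_div_of_pos_left hξ ha hab
  have hprod : (ξ / a) * (-(ξ / b)) < 1 := by nlinarith
  have h := Real.arctan_add hprod
  rw [Real.arctan_neg] at h
  have harg : (ξ / a + -(ξ / b)) / (1 - ξ / a * -(ξ / b)) ≤ ξ / a - ξ / b := by
    rw [div_le_iff₀ (by nlinarith)]
    nlinarith [mul_nonneg (sub_nonneg.mpr hvu.le) (mul_pos hu hv).le]
  have hnn : 0 ≤ (ξ / a + -(ξ / b)) / (1 - ξ / a * -(ξ / b)) := by
    apply div_nonneg (by linarith) (by nlinarith)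
  have := my_arctan_le_self hnn
  linarith

lemma my_arg_eq_arctan {z : ℂ} (h : 0 < z.re) : Complex.arg z = Real.arctan (z.im / z.re) := by
  have h1 : |Complex.arg z| < Real.pi / 2 := Complex.abs_arg_lt_pi_div_two_iff.mpr (Or.inl h)
  rw [abs_lt] at h1
  rw [← Complex.tan_arg, Real.arctan_tan h1.1 h1.2]

lemma my_ne_zero {b ξ : ℝ} (hξ : 0 < ξ) : ((b : ℂ) + Complex.I * (ξ : ℂ)) ≠ 0 := by
  intro h
  have := congrArg Complex.im h
  simp at this
  exact hξ.ne' this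

lemma my_quot_eq {a b ξ : ℝ} (hne : ((a:ℂ) + Complex.I * ξ) ≠ 0) (hden : a ^ 2 + ξ ^ 2 ≠ 0) :
    ((b : ℂ) + Complex.I * ξ) / ((a : ℂ) + Complex.I * ξ) =
      (((a * b + ξ ^ 2) / (a ^ 2 + ξ ^ 2) : ℝ) : ℂ) +
        Complex.I * (((a - b) * ξ / (a ^ 2 + ξ ^ 2) : ℝ) : ℂ) := by
  set X : ℝ := (a * b + ξ ^ 2) / (a ^ 2 + ξ ^ 2) with hX
  set Y : ℝ := (a - b) * ξ / (a ^ 2 + ξ ^ 2) with hY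
  have h1 : X * a - Y * ξ = b := by rw [hX, hY]; field_simp; ring
  have h2 : X * ξ + Y * a = ξ := by rw [hX, hY]; field_simp; ring
  rw [div_eq_iff hne]
  apply Complex.ext
  · simp [Complex.mul_re, my_mk_re, my_mk_im]; linarith
  · simp [Complex.mul_im, my_mk_re, my_mk_im]; linarith

lemma my_arg_quot {a b ξ : ℝ} (ha : 0 < a) (hab : a < b) (hξ : 0 < ξ) :
    Complex.arg (((b : ℂ) + Complex.I * ξ) / ((a : ℂ) + Complex.I * ξ)) =
      Real.arctan (ξ / b) - Real.arctan (ξ / a) := by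
  have hb : 0 < b := ha.trans hab
  have hden : (0:ℝ) < a ^ 2 + ξ ^ 2 := by positivity
  rw [my_quot_eq (my_ne_zero hξ) hden.ne']
  have hre0 : (0:ℝ) < (a * b + ξ ^ 2) / (a ^ 2 + ξ ^ 2) := by positivity
  rw [my_arg_eq_arctan (by rw [my_mk_re]; exact hre0), my_mk_re, my_mk_im]
  have hdiv : (a - b) * ξ / (a ^ 2 + ξ ^ 2) / ((a * b + ξ ^ 2) / (a ^ 2 + ξ ^ 2))
      = (a - b) * ξ / (a * b + ξ ^ 2) := by
    rw [div_div_div_cancel_right₀]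
    exact hden.ne'
  rw [hdiv]
  have hprod : (ξ / b) * (-(ξ / a)) < 1 := by
    have : 0 < (ξ / b) * (ξ / a) := by positivity
    nlinarith
  have h := Real.arctan_add hprod
  rw [Real.arctan_neg] at h
  have heq : (ξ / b + -(ξ / a)) / (1 - ξ / b * -(ξ / a)) = (a - b) * ξ / (a * b + ξ ^ 2) := by
    rw [div_eq_div_iff (by nlinarith) (by nlinarith)]
    field_simp
    ring
  rw [heq] at h
  linarith [h]


lemma my_sum_aux {α σ : ℝ} (hα : 0 < α) (hα' : α < 1/2) (hσ : 1 - α ≤ σ) (n : ℕ) :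
    ∑ j ∈ Finset.range (n+1), 1/((σ+(j:ℝ))*(σ+2*α+(j:ℝ)))
      ≤ 1/(1-α^2) + 2/3 - 2/(2*(n:ℝ)+3) := by
  induction n with
  | zero =>
      rw [Finset.sum_range_one]
      have h1 : (0:ℝ) < (1-α)*(1+α) := by nlinarith
      have h2 : (1-α)*(1+α) ≤ (σ+(0:ℕ))*(σ+2*α+(0:ℕ)) := by push_cast; nlinarith
      have h3 := one_div_le_one_div_of_le h1 h2
      have h4 : 1/((1-α)*(1+α)) = 1/(1-α^2) := by ring_nf
      have h5 : 2/(2*((0:ℕ):ℝ)+3) = 2/3 := by norm_num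
      rw [h5]
      linarith
  | succ n ih =>
      rw [Finset.sum_range_succ]
      have hn : (0:ℝ) ≤ (n:ℝ) := Nat.cast_nonneg n
      have hterm : 1/((σ+((n+1:ℕ):ℝ))*(σ+2*α+((n+1:ℕ):ℝ)))
          ≤ 2/(2*(n:ℝ)+3) - 2/(2*(n:ℝ)+5) := by
        push_cast
        have hd1 : (0:ℝ) < ((n:ℝ)+3/2)*((n:ℝ)+5/2) := by nlinarith
        have hd2 : ((n:ℝ)+3/2)*((n:ℝ)+5/2) ≤ (σ+((n:ℝ)+1))*(σ+2*α+((n:ℝ)+1)) := by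
          nlinarith [mul_nonneg (sub_nonneg.mpr hσ) hn,
            mul_nonneg (sub_nonneg.mpr hσ) (sub_nonneg.mpr hσ), sq_nonneg α]
        have h3 := one_div_le_one_div_of_le hd1 hd2
        have h4 : 1/(((n:ℝ)+3/2)*((n:ℝ)+5/2)) = 2/(2*(n:ℝ)+3) - 2/(2*(n:ℝ)+5) := by
          rw [div_sub_div _ _ (by nlinarith) (by nlinarith)]
          rw [div_eq_div_iff (by nlinarith) (by nlinarith)]
          ring
        linarith
      have h6 : 2/(2*((n+1:ℕ):ℝ)+3) = 2/(2*(n:ℝ)+5) := by push_cast; ring_nf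
      rw [h6]
      linarith

set_option maxHeartbeats 1000000 in
/-- For `0 < α < 1/2`, `σ ≥ 1−α` and `0 < ξ < 1/4`, one has
`−π/2 < −4αξ < arg B(σ+iξ, 2α) < 0`, where
`B(σ+iξ, 2α) = Γ(σ+iξ)·Γ(2α)/Γ(σ+2α+iξ)` and `arg` is the principal argument. -/
theorem arg_Beta_gt_neg_four_alpha_xi
    (α σ ξ : ℝ) (hα : 0 < α) (hα' : α < 1 / 2) (hσ : 1 - α ≤ σ)
    (hξ : 0 < ξ) (hξ' : ξ < 1 / 4) :
    -(Real.pi / 2) < -4 * α * ξ ∧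
      -4 * α * ξ < Complex.arg (Complex.Gamma ((σ : ℂ) + Complex.I * (ξ : ℂ)) *
        Complex.Gamma (2 * (α : ℂ)) /
        Complex.Gamma ((σ : ℂ) + 2 * (α : ℂ) + Complex.I * (ξ : ℂ))) ∧
      Complex.arg (Complex.Gamma ((σ : ℂ) + Complex.I * (ξ : ℂ)) *
        Complex.Gamma (2 * (α : ℂ)) /
        Complex.Gamma ((σ : ℂ) + 2 * (α : ℂ) + Complex.I * (ξ : ℂ))) < 0 := by
  have hπ := Real.pi_gt_three
  have hσ0 : (0:ℝ) < σ := by linarith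
  have hα2 : α^2 < 1/4 := by nlinarith
  have h1α : (0:ℝ) < 1 - α^2 := by nlinarith
  obtain ⟨θ, hθdef⟩ : ∃ θ : ℝ, θ = 2*α*ξ*(1/(1-α^2) + 2/3) := ⟨_, rfl⟩
  have hinv_pos : (0:ℝ) < 1/(1-α^2) := by positivity
  have hθpos : 0 < θ := by rw [hθdef]; positivity
  have hθlt : θ < 4*α*ξ := by
    have h43 : 1/(1-α^2) < 4/3 := by
      rw [div_lt_div_iff₀ h1α (by norm_num)]; nlinarith
    rw [hθdef]
    have hαξ : 0 < α*ξ := mul_pos hα hξ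
    nlinarith
  have h4αξ : 4*α*ξ < 1/2 := by nlinarith
  have hθhalf : θ < Real.pi/2 := by linarith
  -- the sequences
  have ha : ∀ j : ℕ, (0:ℝ) < σ + (j:ℝ) := fun j => by positivity
  have hab : ∀ j : ℕ, σ + (j:ℝ) < σ + 2*α + (j:ℝ) := fun j => by linarith
  obtain ⟨g, hg⟩ : ∃ g : ℕ → ℝ,
      g = fun j : ℕ => Real.arctan (ξ/(σ+2*α+(j:ℝ))) - Real.arctan (ξ/(σ+(j:ℝ))) :=
    ⟨fun j : ℕ => Real.arctan (ξ/(σ+2*α+(j:ℝ))) - Real.arctan (ξ/(σ+(j:ℝ))), rfl⟩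
  obtain ⟨f, hf⟩ : ∃ f : ℕ → ℂ,
      f = fun j : ℕ => (((σ+2*α+(j:ℝ) : ℝ) : ℂ) + Complex.I*(ξ:ℂ))
        / (((σ+(j:ℝ) : ℝ) : ℂ) + Complex.I*(ξ:ℂ)) :=
    ⟨fun j : ℕ => (((σ+2*α+(j:ℝ) : ℝ) : ℂ) + Complex.I*(ξ:ℂ))
        / (((σ+(j:ℝ) : ℝ) : ℂ) + Complex.I*(ξ:ℂ)), rfl⟩
  obtain ⟨P, hPdef⟩ : ∃ P : ℕ → ℂ, P = fun n => ∏ j ∈ Finset.range (n+1), f j := ⟨_, rfl⟩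
  have hgneg : ∀ j : ℕ, g j < 0 := by
    intro j
    have := Real.arctan_strictMono (div_lt_div_of_pos_left hξ (ha j) (hab j))
    simp only [hg]
    linarith
  have hglow : ∀ j : ℕ, -(2*α*ξ * (1/((σ+(j:ℝ))*(σ+2*α+(j:ℝ))))) ≤ g j := by
    intro j
    have h1 := my_arctan_diff_le (ha j) (hab j) hξ
    have h2 : ξ/(σ+(j:ℝ)) - ξ/(σ+2*α+(j:ℝ))
        = 2*α*ξ * (1/((σ+(j:ℝ))*(σ+2*α+(j:ℝ)))) := by
      field_simp
      ring
    rw [h2] at h1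
    simp only [hg]
    linarith
  have hsum_g_low : ∀ n : ℕ, -θ ≤ ∑ j ∈ Finset.range (n+1), g j := by
    intro n
    have h1 : ∑ j ∈ Finset.range (n+1), -(2*α*ξ * (1/((σ+(j:ℝ))*(σ+2*α+(j:ℝ)))))
        ≤ ∑ j ∈ Finset.range (n+1), g j := Finset.sum_le_sum fun j _ => hglow j
    rw [Finset.sum_neg_distrib, ← Finset.mul_sum] at h1
    have h3 := my_sum_aux hα hα' hσ n
    have h5 : (0:ℝ) < 2/(2*(n:ℝ)+3) := by positivity
    have h4 : 2*α*ξ * (∑ j ∈ Finset.range (n+1), 1/((σ+(j:ℝ))*(σ+2*α+(j:ℝ))))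
        ≤ 2*α*ξ * (1/(1-α^2) + 2/3) :=
      mul_le_mul_of_nonneg_left (by linarith) (by positivity)
    rw [hθdef]
    linarith
  have hsum_g_up : ∀ n : ℕ, ∑ j ∈ Finset.range (n+1), g j ≤ g 0 := by
    intro n
    induction n with
    | zero => rw [Finset.sum_range_one]
    | succ n ih =>
        rw [Finset.sum_range_succ]
        linarith [hgneg (n+1)]
  obtain ⟨t₀, ht0def⟩ : ∃ t₀ : ℝ, t₀ = -(g 0) := ⟨_, rfl⟩
  have ht0pos : 0 < t₀ := by rw [ht0def]; linarith [hgneg 0]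
  have ht0θ : t₀ ≤ θ := by
    have := hsum_g_low 0
    rw [Finset.sum_range_one] at this
    rw [ht0def]; linarith
  have hfarg : ∀ j : ℕ, Complex.arg (f j) = g j := by
    intro j
    simp only [hf, hg]
    exact my_arg_quot (ha j) (hab j) hξ
  have hfne : ∀ j : ℕ, f j ≠ 0 := by
    intro j
    simp only [hf]
    exact div_ne_zero (my_ne_zero hξ) (my_ne_zero hξ)
  have hPkey : ∀ n : ℕ, P n ≠ 0 ∧ Complex.arg (P n) = ∑ j ∈ Finset.range (n+1), g j := by
    intro n
    induction n with
    | zero =>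
        constructor
        · simp only [hPdef, zero_add, Finset.prod_range_one]; exact hfne 0
        · simp only [hPdef, zero_add, Finset.prod_range_one, Finset.sum_range_one]
          exact hfarg 0
    | succ n ih =>
        have hP1 : P (n+1) = P n * f (n+1) := by
          simp only [hPdef, Finset.prod_range_succ]
        have hmem : Complex.arg (P n) + Complex.arg (f (n+1)) ∈ Set.Ioc (-Real.pi) Real.pi := by
          rw [ih.2, hfarg (n+1), ← Finset.sum_range_succ]
          constructor
          · have := hsum_g_low (n+1)
            linarith
          · have h1 := hsum_g_up (n+1)
            have h2 := hgneg 0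
            linarith
        constructor
        · rw [hP1]; exact mul_ne_zero ih.1 (hfne (n+1))
        · rw [hP1, Complex.arg_mul ih.1 (hfne (n+1)) hmem, ih.2, hfarg (n+1),
            ← Finset.sum_range_succ]
  -- sector membership for P n
  have hPmem : ∀ n : ℕ, 0 ≤ (P n).re ∧ (P n).im + Real.tan t₀ * (P n).re ≤ 0 ∧
      0 ≤ (P n).im + Real.tan θ * (P n).re := by
    intro n
    obtain ⟨hPne, hPargeq⟩ := hPkey n
    have hφlow : -θ ≤ Complex.arg (P n) := by rw [hPargeq]; exact hsum_g_low n
    have hφup : Complex.arg (P n) ≤ -t₀ := by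
      rw [hPargeq, ht0def, neg_neg]; exact hsum_g_up n
    have hφIoo : Complex.arg (P n) ∈ Set.Ioo (-(Real.pi/2)) (Real.pi/2) :=
      ⟨by linarith, by linarith⟩
    have hcos : 0 < Real.cos (Complex.arg (P n)) := Real.cos_pos_of_mem_Ioo hφIoo
    have habs : (0:ℝ) ≤ ‖P n‖ := norm_nonneg _
    have hre : (P n).re = ‖P n‖ * Real.cos (Complex.arg (P n)) :=
      (Complex.norm_mul_cos_arg (P n)).symm
    have him : (P n).im = ‖P n‖ * Real.sin (Complex.arg (P n)) :=
      (Complex.norm_mul_sin_arg (P n)).symm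
    have hsin : Real.sin (Complex.arg (P n))
        = Real.tan (Complex.arg (P n)) * Real.cos (Complex.arg (P n)) := by
      rw [Real.tan_eq_sin_div_cos, div_mul_cancel₀]
      exact hcos.ne'
    have hmem1 : -t₀ ∈ Set.Ioo (-(Real.pi/2)) (Real.pi/2) := ⟨by linarith, by linarith⟩
    have hmem2 : -θ ∈ Set.Ioo (-(Real.pi/2)) (Real.pi/2) := ⟨by linarith, by linarith⟩
    have htan1 : Real.tan (Complex.arg (P n)) ≤ Real.tan (-t₀) :=
      Real.strictMonoOn_tan.monotoneOn hφIoo hmem1 hφup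
    have htan2 : Real.tan (-θ) ≤ Real.tan (Complex.arg (P n)) :=
      Real.strictMonoOn_tan.monotoneOn hmem2 hφIoo hφlow
    rw [Real.tan_neg] at htan1 htan2
    refine ⟨?_, ?_, ?_⟩
    · rw [hre]; exact mul_nonneg habs hcos.le
    · rw [hre, him, hsin]
      have hfac : ‖P n‖ * (Real.tan (Complex.arg (P n)) * Real.cos (Complex.arg (P n))) +
          Real.tan t₀ * (‖P n‖ * Real.cos (Complex.arg (P n)))
          = (‖P n‖ * Real.cos (Complex.arg (P n)))
            * (Real.tan (Complex.arg (P n)) + Real.tan t₀) := by ring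
      rw [hfac]
      exact mul_nonpos_of_nonneg_of_nonpos (mul_nonneg habs hcos.le) (by linarith)
    · rw [hre, him, hsin]
      have hfac : ‖P n‖ * (Real.tan (Complex.arg (P n)) * Real.cos (Complex.arg (P n))) +
          Real.tan θ * (‖P n‖ * Real.cos (Complex.arg (P n)))
          = (‖P n‖ * Real.cos (Complex.arg (P n)))
            * (Real.tan (Complex.arg (P n)) + Real.tan θ) := by ring
      rw [hfac]
      exact mul_nonneg (mul_nonneg habs hcos.le) (by linarith)
  -- Gamma setup
  obtain ⟨z, hz⟩ : ∃ z : ℂ, z = (σ:ℂ) + Complex.I*(ξ:ℂ) := ⟨_, rfl⟩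
  obtain ⟨w, hw⟩ : ∃ w : ℂ, w = 2*(α:ℂ) := ⟨_, rfl⟩
  have hzj : ∀ j : ℕ, z + (j:ℂ) = ((σ+(j:ℝ) : ℝ) : ℂ) + Complex.I*(ξ:ℂ) := by
    intro j; rw [hz]; push_cast; ring
  have hwzj : ∀ j : ℕ, z + w + (j:ℂ) = ((σ+2*α+(j:ℝ) : ℝ) : ℂ) + Complex.I*(ξ:ℂ) := by
    intro j; rw [hz, hw]; push_cast; ring
  have hzj_ne : ∀ j : ℕ, z + (j:ℂ) ≠ 0 := fun j => by rw [hzj j]; exact my_ne_zero hξ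
  have hwzj_ne : ∀ j : ℕ, z + w + (j:ℂ) ≠ 0 := fun j => by rw [hwzj j]; exact my_ne_zero hξ
  have hratio : ∀ n : ℕ, 1 ≤ n → Complex.GammaSeq z n / Complex.GammaSeq (z+w) n
      = (((n:ℝ)^(-(2*α)) : ℝ) : ℂ) * P n := by
    intro n hn
    have hn0 : (n:ℂ) ≠ 0 := Nat.cast_ne_zero.mpr (by omega)
    have hnz : (n:ℂ)^z ≠ 0 := by
      intro h; exact hn0 ((Complex.cpow_eq_zero_iff _ _).mp h).1
    have hnw : (n:ℂ)^w ≠ 0 := by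
      intro h; exact hn0 ((Complex.cpow_eq_zero_iff _ _).mp h).1
    have hfact : ((Nat.factorial n : ℕ) : ℂ) ≠ 0 := Nat.cast_ne_zero.mpr (Nat.factorial_ne_zero n)
    have hprodz : (∏ j ∈ Finset.range (n+1), (z + (j:ℂ))) ≠ 0 :=
      Finset.prod_ne_zero_iff.mpr fun j _ => hzj_ne j
    have hprodwz : (∏ j ∈ Finset.range (n+1), (z + w + (j:ℂ))) ≠ 0 :=
      Finset.prod_ne_zero_iff.mpr fun j _ => hwzj_ne j
    have hpow : (((n:ℝ)^(-(2*α)) : ℝ) : ℂ) = ((n:ℂ)^w)⁻¹ := by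
      rw [Complex.ofReal_cpow (Nat.cast_nonneg n) (-(2*α)), Complex.ofReal_natCast,
        show ((-(2*α) : ℝ) : ℂ) = -w by rw [hw]; push_cast; ring, Complex.cpow_neg]
    have hPn : P n = (∏ j ∈ Finset.range (n+1), (z+w+(j:ℂ)))
        / (∏ j ∈ Finset.range (n+1), (z+(j:ℂ))) := by
      rw [← Finset.prod_div_distrib]
      simp only [hPdef]
      refine Finset.prod_congr rfl fun j _ => ?_
      rw [hzj j, hwzj j, hf]
    simp only [Complex.GammaSeq]
    rw [hpow, hPn, Complex.cpow_add _ _ hn0]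
    field_simp
  have hzwre : z + w = ((σ+2*α : ℝ) : ℂ) + Complex.I*(ξ:ℂ) := by rw [hz, hw]; push_cast; ring
  have hGzw_ne : Complex.Gamma (z+w) ≠ 0 := by
    apply Complex.Gamma_ne_zero_of_re_pos
    rw [hzwre, my_mk_re]
    linarith
  have htend : Tendsto (fun n => Complex.Gamma w *
      (Complex.GammaSeq z n / Complex.GammaSeq (z+w) n)) atTop
      (𝓝 (Complex.Gamma w * (Complex.Gamma z / Complex.Gamma (z+w)))) :=
    (((Complex.GammaSeq_tendsto_Gamma z).div
      (Complex.GammaSeq_tendsto_Gamma (z+w)) hGzw_ne).const_mul _)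
  have hGw_real : Complex.Gamma w = ((Real.Gamma (2*α) : ℝ) : ℂ) := by
    rw [hw, show (2*(α:ℂ)) = ((2*α : ℝ) : ℂ) by push_cast; ring, Complex.Gamma_ofReal]
  have hSclosed : IsClosed {u : ℂ | 0 ≤ u.re ∧ u.im + Real.tan t₀ * u.re ≤ 0 ∧
      0 ≤ u.im + Real.tan θ * u.re} := by
    have e : {u : ℂ | 0 ≤ u.re ∧ u.im + Real.tan t₀ * u.re ≤ 0 ∧
        0 ≤ u.im + Real.tan θ * u.re} = {u : ℂ | 0 ≤ u.re} ∩
        ({u : ℂ | u.im + Real.tan t₀ * u.re ≤ 0} ∩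
         {u : ℂ | 0 ≤ u.im + Real.tan θ * u.re}) := rfl
    rw [e]
    refine (isClosed_le continuous_const Complex.continuous_re).inter
      ((isClosed_le (Complex.continuous_im.add
        (continuous_const.mul Complex.continuous_re)) continuous_const).inter
      (isClosed_le continuous_const (Complex.continuous_im.add
        (continuous_const.mul Complex.continuous_re))))
  have hmemS : ∀ᶠ n in atTop, Complex.Gamma w *
      (Complex.GammaSeq z n / Complex.GammaSeq (z+w) n) ∈
      {u : ℂ | 0 ≤ u.re ∧ u.im + Real.tan t₀ * u.re ≤ 0 ∧
        0 ≤ u.im + Real.tan θ * u.re} := by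
    filter_upwards [eventually_ge_atTop 1] with n hn
    rw [hratio n hn, hGw_real, ← mul_assoc, ← Complex.ofReal_mul]
    have hc0 : 0 ≤ Real.Gamma (2*α) * ((n:ℝ)^(-(2*α))) :=
      mul_nonneg (Real.Gamma_pos_of_pos (by linarith)).le
        (Real.rpow_nonneg (Nat.cast_nonneg n) _)
    obtain ⟨h1, h2, h3⟩ := hPmem n
    refine ⟨?_, ?_, ?_⟩
    · rw [Complex.re_ofReal_mul]
      exact mul_nonneg hc0 h1
    · rw [Complex.re_ofReal_mul, Complex.im_ofReal_mul,
        show Real.Gamma (2*α) * (n:ℝ)^(-(2*α)) * (P n).im +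
          Real.tan t₀ * (Real.Gamma (2*α) * (n:ℝ)^(-(2*α)) * (P n).re)
          = Real.Gamma (2*α) * (n:ℝ)^(-(2*α)) * ((P n).im + Real.tan t₀ * (P n).re) by ring]
      exact mul_nonpos_of_nonneg_of_nonpos hc0 h2
    · rw [Complex.re_ofReal_mul, Complex.im_ofReal_mul,
        show Real.Gamma (2*α) * (n:ℝ)^(-(2*α)) * (P n).im +
          Real.tan θ * (Real.Gamma (2*α) * (n:ℝ)^(-(2*α)) * (P n).re)
          = Real.Gamma (2*α) * (n:ℝ)^(-(2*α)) * ((P n).im + Real.tan θ * (P n).re) by ring]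
      exact mul_nonneg hc0 h3
  obtain ⟨B, hBdef⟩ : ∃ B : ℂ,
      B = Complex.Gamma z * Complex.Gamma w / Complex.Gamma (z+w) := ⟨_, rfl⟩
  have hBeq : Complex.Gamma w * (Complex.Gamma z / Complex.Gamma (z+w)) = B := by
    rw [hBdef]; ring
  have hBmem := hSclosed.mem_of_tendsto htend hmemS
  rw [hBeq] at hBmem
  have hzre : z.re = σ := by rw [hz, my_mk_re]
  have hwre : w.re = 2*α := by rw [hw]; simp
  have hBne : B ≠ 0 := by
    rw [hBdef]
    exact div_ne_zero (mul_ne_zero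
      (Complex.Gamma_ne_zero_of_re_pos (by rw [hzre]; linarith))
      (Complex.Gamma_ne_zero_of_re_pos (by rw [hwre]; linarith))) hGzw_ne
  obtain ⟨hm1, hm2, hm3⟩ := hBmem
  have hre_pos : 0 < B.re := by
    rcases lt_or_eq_of_le hm1 with h|h
    · exact h
    · exfalso
      rw [← h, mul_zero, add_zero] at hm2 hm3
      exact hBne (Complex.ext (by rw [← h]; simp) (by simp; linarith))
  have htanpos : 0 < Real.tan t₀ :=
    Real.tan_pos_of_pos_of_lt_pi_div_two ht0pos (by linarith)
  have him_neg : B.im < 0 := by linarith [mul_pos htanpos hre_pos]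
  have harg_lt : Complex.arg B < 0 := Complex.arg_neg_iff.mpr him_neg
  have harg_gt : -θ ≤ Complex.arg B := by
    rw [my_arg_eq_arctan hre_pos]
    have hdivge : -Real.tan θ ≤ B.im / B.re := by
      rw [le_div_iff₀ hre_pos]
      linarith
    calc -θ = Real.arctan (-Real.tan θ) := by
          rw [Real.arctan_neg, Real.arctan_tan (by linarith) (by linarith)]
      _ ≤ Real.arctan (B.im / B.re) := Real.arctan_strictMono.monotone hdivge
  have hzgoal : Complex.Gamma ((σ:ℂ) + Complex.I*(ξ:ℂ)) * Complex.Gamma (2*(α:ℂ)) /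
      Complex.Gamma ((σ:ℂ) + 2*(α:ℂ) + Complex.I*(ξ:ℂ)) = B := by
    rw [hBdef, hz, hw,
      show (σ:ℂ) + 2*(α:ℂ) + Complex.I*(ξ:ℂ)
        = (σ:ℂ) + Complex.I*(ξ:ℂ) + 2*(α:ℂ) by ring]
  rw [hzgoal]
  exact ⟨by linarith, by linarith, harg_lt⟩
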